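/- Let J be the two-sided ideal of A generated by the pre-Lie associator elements x·(y·z) − (x·y)·z − y·(x·z) + (y·x)·z for x, y, z ∈ A, and take T(J) and O(J) with respect to the order ≼. Then O(J) is exactly the set of monomials σ ∈ FreeMagma E having nondecreasing branches. -/

import Mathlib

/-- The additive extension of the degree function `d : E → ℕ` to the free magma. -/
def FreeMagma.mdeg {E : Type*} (d : E → ℕ) : FreeMagma E → ℕ
  | .of a => d a
  | .mul x y => FreeMagma.mdeg d x + FreeMagma.mdeg d y

/-- The number of branches: `b a = 0` on generators and `b (x·y) = b y + 1`. -/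
def FreeMagma.nbranch {E : Type*} : FreeMagma E → ℕ
  | .of _ => 0
  | .mul _ y => FreeMagma.nbranch y + 1

/-- The list of branches: `ℓ a = []` and `ℓ (x·y) = x :: ℓ y`. -/
def FreeMagma.branchList {E : Type*} : FreeMagma E → List (FreeMagma E)
  | .of _ => []
  | .mul x y => x :: FreeMagma.branchList y

/-- The root: `r a = a` and `r (x·y) = r y`. -/
def FreeMagma.rootOf {E : Type*} : FreeMagma E → E
  | .of a => a
  | .mul _ y => FreeMagma.rootOf y

/-- The strict order `≺` on the free magma (planar `E`-decorated rooted trees):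
compare by degree, then by number of branches, then lexicographically on the list of
branches, then by the root decoration. -/
inductive MagmaLt {E : Type*} [LT E] (d : E → ℕ) : FreeMagma E → FreeMagma E → Prop
  | deg {σ τ : FreeMagma E} : FreeMagma.mdeg d σ < FreeMagma.mdeg d τ → MagmaLt d σ τ
  | branches {σ τ : FreeMagma E} : FreeMagma.mdeg d σ = FreeMagma.mdeg d τ →
      FreeMagma.nbranch σ < FreeMagma.nbranch τ → MagmaLt d σ τ
  | lex {σ τ : FreeMagma E} : FreeMagma.mdeg d σ = FreeMagma.mdeg d τ →
      FreeMagma.nbranch σ = FreeMagma.nbranch τ →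
      List.Lex (MagmaLt d) (FreeMagma.branchList σ) (FreeMagma.branchList τ) → MagmaLt d σ τ
  | root {σ τ : FreeMagma E} : FreeMagma.mdeg d σ = FreeMagma.mdeg d τ →
      FreeMagma.nbranch σ = FreeMagma.nbranch τ →
      FreeMagma.branchList σ = FreeMagma.branchList τ →
      FreeMagma.rootOf σ < FreeMagma.rootOf τ → MagmaLt d σ τ

/-- The monomial corresponding to an element of the free magma, inside the free
non-unital non-associative algebra. -/
noncomputable def magmaMonomial {E : Type*} (z : FreeMagma E) :
    FreeNonUnitalNonAssocAlgebra ℚ E :=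
  MonoidAlgebra.single z (1 : ℚ)

/-- A ℚ-submodule of the magma algebra which is stable under left and right
multiplication by arbitrary elements: a two-sided ideal. -/
def IsTwoSidedIdealSubmodule {E : Type*}
    (I : Submodule ℚ (FreeNonUnitalNonAssocAlgebra ℚ E)) : Prop :=
  ∀ a x : FreeNonUnitalNonAssocAlgebra ℚ E, x ∈ I → a * x ∈ I ∧ x * a ∈ I

/-- The smallest two-sided ideal (ℚ-submodule closed under left and right multiplication)
containing a given set. -/
noncomputable def twoSidedIdealGen {E : Type*} (S : Set (FreeNonUnitalNonAssocAlgebra ℚ E)) :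
    Submodule ℚ (FreeNonUnitalNonAssocAlgebra ℚ E) :=
  sInf {I | IsTwoSidedIdealSubmodule I ∧ S ⊆ I}

/-- `z` is the `≼`-maximal term of `f`: it lies in the support of `f` and strictly
dominates every other monomial of the support. -/
def IsMaxTermWrt {E : Type*} [LT E] (d : E → ℕ)
    (f : FreeNonUnitalNonAssocAlgebra ℚ E) (z : FreeMagma E) : Prop :=
  z ∈ f.coeff.support ∧ ∀ w ∈ f.coeff.support, w ≠ z → MagmaLt d w z

/-- `T(I)` with respect to the order `≼`: the set of maximal terms of (nonzero)
elements of `I`. -/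
def maxTermSetWrt {E : Type*} [LT E] (d : E → ℕ)
    (I : Submodule ℚ (FreeNonUnitalNonAssocAlgebra ℚ E)) : Set (FreeMagma E) :=
  {z | ∃ f ∈ I, IsMaxTermWrt d f z}

/-- The set of pre-Lie associator elements `x·(y·z) − (x·y)·z − y·(x·z) + (y·x)·z`
for `x, y, z` in the magma algebra. -/
def preLieAssocSet (E : Type*) : Set (FreeNonUnitalNonAssocAlgebra ℚ E) :=
  {w | ∃ x y z : FreeNonUnitalNonAssocAlgebra ℚ E,
    w = x * (y * z) - (x * y) * z - y * (x * z) + (y * x) * z}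

/-- A monomial has nondecreasing branches if at every vertex the branches are displayed
in `≼`-nondecreasing order from left to right. -/
def HasNondecreasingBranches {E : Type*} [LT E] (d : E → ℕ) : FreeMagma E → Prop
  | .of _ => True
  | .mul x y => HasNondecreasingBranches d x ∧ HasNondecreasingBranches d y ∧
      ∀ u v : FreeMagma E, y = u * v → (MagmaLt d x u ∨ x = u)

namespace PreLie
open FreeMagma

variable {E : Type*} [LinearOrder E] {d : E → ℕ}
set_option linter.unusedSectionVars false

/-- number of leaves -/
def msize : FreeMagma E → ℕ
  | .of _ => 1
  | .mul x y => msize x + msize y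

@[simp] lemma mul_def' (x y : FreeMagma E) : FreeMagma.mul x y = x * y := rfl

@[simp] lemma msize_of (a : E) : msize (.of a) = 1 := rfl
@[simp] lemma msize_mul (x y : FreeMagma E) : msize (x * y) = msize x + msize y := rfl
@[simp] lemma mdeg_mul (x y : FreeMagma E) :
    mdeg d (x * y) = mdeg d x + mdeg d y := rfl
@[simp] lemma mdeg_of (a : E) : mdeg d (.of a) = d a := rfl
@[simp] lemma nbranch_mul (x y : FreeMagma E) : nbranch (x * y) = nbranch y + 1 := rfl
@[simp] lemma nbranch_of (a : E) : nbranch (.of a : FreeMagma E) = 0 := rfl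
@[simp] lemma branchList_mul (x y : FreeMagma E) : branchList (x * y) = x :: branchList y := rfl
@[simp] lemma branchList_of (a : E) : branchList (.of a : FreeMagma E) = [] := rfl
@[simp] lemma rootOf_mul (x y : FreeMagma E) : rootOf (x * y) = rootOf y := rfl
@[simp] lemma rootOf_of (a : E) : rootOf (.of a : FreeMagma E) = a := rfl

lemma msize_pos (σ : FreeMagma E) : 1 ≤ msize σ := by
  induction σ with
  | ih1 a => simp
  | ih2 x y ihx ihy => simp; omega

lemma msize_lt_of_mem_branchList {a σ : FreeMagma E} (h : a ∈ branchList σ) :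
    msize a < msize σ := by
  induction σ with
  | ih1 b => simp at h
  | ih2 x y ihx ihy =>
    simp only [mul_def', branchList_mul, List.mem_cons] at h
    rcases h with rfl | h
    · have := msize_pos y; simp; omega
    · have := ihy h; have := msize_pos x; simp; omega


lemma mdeg_le_of_lt {σ τ : FreeMagma E} (h : MagmaLt d σ τ) :
    mdeg d σ ≤ mdeg d τ := by
  cases h with
  | deg h => omega
  | branches h _ => omega
  | lex h _ _ => omega
  | root h _ _ _ => omega

lemma nbranch_le_of_lt {σ τ : FreeMagma E} (h : MagmaLt d σ τ)
    (hdeg : mdeg d σ = mdeg d τ) : nbranch σ ≤ nbranch τ := by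
  cases h with
  | deg h => omega
  | branches _ h => omega
  | lex _ h _ => omega
  | root _ h _ _ => omega

lemma eq_of_branchList_rootOf {σ τ : FreeMagma E}
    (hl : branchList σ = branchList τ) (hr : rootOf σ = rootOf τ) : σ = τ := by
  induction σ generalizing τ with
  | ih1 a => cases τ with
    | of b => cases (show a = b by simpa using hr); rfl
    | mul x y => simp at hl
  | ih2 x y ihx ihy =>
    cases τ with
    | of b => simp at hl
    | mul x' y' =>
      simp only [mul_def', branchList_mul, List.cons.injEq, rootOf_mul] at hl hr
      obtain ⟨rfl, hl2⟩ := hl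
      rw [mul_def', ihy hl2 hr]

/-- pointwise-hypothesis transitivity for `List.Lex`. -/
lemma lex_trans {α : Type*} {r : α → α → Prop} :
    ∀ {l₁ l₂ l₃ : List α},
      (∀ a ∈ l₁, ∀ b ∈ l₂, ∀ c ∈ l₃, r a b → r b c → r a c) →
      List.Lex r l₁ l₂ → List.Lex r l₂ l₃ → List.Lex r l₁ l₃ := by
  intro l₁ l₂ l₃ H h1 h2
  induction h1 generalizing l₃ with
  | nil => cases h2 with
    | cons _ => exact List.Lex.nil
    | rel _ => exact List.Lex.nil
  | @cons a t₁ t₂ h ih =>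
    cases h2 with
    | @cons _ _ t₃ h' =>
      exact List.Lex.cons (ih (fun p hp q hq s hs => H p (by simp [hp]) q (by simp [hq]) s
        (by simp [hs])) h')
    | @rel _ _ b t₃ hab => exact List.Lex.rel hab
  | @rel a t₁ b t₂ hab =>
    cases h2 with
    | @cons _ _ t₃ h' => exact List.Lex.rel hab
    | @rel _ _ c t₃ hbc =>
      exact List.Lex.rel (H a (by simp) b (by simp) c (by simp) hab hbc)

lemma lex_irrefl {α : Type*} {r : α → α → Prop} :
    ∀ (l : List α), (∀ a ∈ l, ¬ r a a) → ¬ List.Lex r l l := by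
  intro l H h
  induction l with
  | nil => cases h
  | cons a t ih =>
    cases h with
    | cons h => exact ih (fun p hp => H p (by simp [hp])) h
    | rel h => exact H a (by simp) h

lemma lex_trichotomy {α : Type*} {r : α → α → Prop} :
    ∀ (l₁ l₂ : List α), (∀ a ∈ l₁, ∀ b ∈ l₂, r a b ∨ a = b ∨ r b a) →
      List.Lex r l₁ l₂ ∨ l₁ = l₂ ∨ List.Lex r l₂ l₁ := by
  intro l₁
  induction l₁ with
  | nil => intro l₂ _; cases l₂ with
    | nil => exact Or.inr (Or.inl rfl)
    | cons b t => exact Or.inl List.Lex.nil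
  | cons a t ih =>
    intro l₂ H
    cases l₂ with
    | nil => exact Or.inr (Or.inr List.Lex.nil)
    | cons b t₂ =>
      rcases H a (by simp) b (by simp) with h | h | h
      · exact Or.inl (List.Lex.rel h)
      · subst h
        rcases ih t₂ (fun p hp q hq => H p (by simp [hp]) q (by simp [hq])) with h | h | h
        · exact Or.inl (List.Lex.cons h)
        · exact Or.inr (Or.inl (by rw [h]))
        · exact Or.inr (Or.inr (List.Lex.cons h))
      · exact Or.inr (Or.inr (List.Lex.rel h))

lemma magmaLt_irrefl : ∀ (σ : FreeMagma E), ¬ MagmaLt d σ σ := by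
  have key : ∀ n (σ : FreeMagma E), msize σ ≤ n → ¬ MagmaLt d σ σ := by
    intro n
    induction n with
    | zero => intro σ h _; have := msize_pos σ; omega
    | succ n ih =>
      intro σ hs h
      cases h with
      | deg h => omega
      | branches _ h => omega
      | lex _ _ h =>
        exact lex_irrefl _ (fun a ha => ih a (by
          have := msize_lt_of_mem_branchList ha; omega)) h
      | root _ _ _ h => exact lt_irrefl _ h
  exact fun σ => key (msize σ) σ le_rfl

lemma magmaLt_trans : ∀ {σ τ ρ : FreeMagma E},
    MagmaLt d σ τ → MagmaLt d τ ρ → MagmaLt d σ ρ := by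
  have key : ∀ n (σ τ ρ : FreeMagma E), msize σ + msize τ + msize ρ ≤ n →
      MagmaLt d σ τ → MagmaLt d τ ρ → MagmaLt d σ ρ := by
    intro n
    induction n with
    | zero => intro σ _ _ h _ _; have := msize_pos σ; omega
    | succ n ih =>
      intro σ τ ρ hs h1 h2
      have d1 := mdeg_le_of_lt h1
      have d2 := mdeg_le_of_lt h2
      by_cases hdeg : mdeg d σ < mdeg d ρ
      · exact .deg hdeg
      have e1 : mdeg d σ = mdeg d τ := by omega
      have e2 : mdeg d τ = mdeg d ρ := by omega
      have b1 := nbranch_le_of_lt h1 e1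
      have b2 := nbranch_le_of_lt h2 e2
      by_cases hbr : nbranch σ < nbranch ρ
      · exact .branches (by omega) hbr
      cases h1 with
      | deg h => omega
      | branches _ h => omega
      | lex _ _ hl1 =>
        cases h2 with
        | deg h => omega
        | branches _ h => omega
        | lex _ _ hl2 =>
          refine .lex (by omega) (by omega) (lex_trans ?_ hl1 hl2)
          intro a ha b hb c hc hab hbc
          refine ih a b c ?_ hab hbc
          have := msize_lt_of_mem_branchList ha
          have := msize_lt_of_mem_branchList hb
          have := msize_lt_of_mem_branchList hc
          omega
        | root _ _ hl2 _ => exact .lex (by omega) (by omega) (hl2 ▸ hl1)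
      | root _ _ hl1 hr1 =>
        cases h2 with
        | deg h => omega
        | branches _ h => omega
        | lex _ _ hl2 => exact .lex (by omega) (by omega) (hl1 ▸ hl2)
        | root _ _ hl2 hr2 =>
          exact .root (by omega) (by omega) (hl1.trans hl2) (hr1.trans hr2)
  exact fun {σ τ ρ} => key (msize σ + msize τ + msize ρ) σ τ ρ le_rfl

lemma magmaLt_asymm {σ τ : FreeMagma E} (h : MagmaLt d σ τ) : ¬ MagmaLt d τ σ :=
  fun h' => magmaLt_irrefl σ (magmaLt_trans h h')

lemma magmaLt_trichotomy : ∀ (σ τ : FreeMagma E),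
    MagmaLt d σ τ ∨ σ = τ ∨ MagmaLt d τ σ := by
  have key : ∀ n (σ τ : FreeMagma E), msize σ + msize τ ≤ n →
      MagmaLt d σ τ ∨ σ = τ ∨ MagmaLt d τ σ := by
    intro n
    induction n with
    | zero => intro σ _ h; have := msize_pos σ; omega
    | succ n ih =>
      intro σ τ hs
      rcases lt_trichotomy (mdeg d σ) (mdeg d τ) with h | h | h
      · exact .inl (.deg h)
      · rcases lt_trichotomy (nbranch σ) (nbranch τ) with h' | h' | h'
        · exact .inl (.branches h h')
        · rcases lex_trichotomy (branchList σ) (branchList τ) (fun a ha b hb => by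
            refine ih a b ?_
            have := msize_lt_of_mem_branchList ha
            have := msize_lt_of_mem_branchList hb
            omega) with hl | hl | hl
          · exact .inl (.lex h h' hl)
          · rcases lt_trichotomy (rootOf σ) (rootOf τ) with hr | hr | hr
            · exact .inl (.root h h' hl hr)
            · exact .inr (.inl (eq_of_branchList_rootOf hl hr))
            · exact .inr (.inr (.root h.symm h'.symm hl.symm hr))
          · exact .inr (.inr (.lex h.symm h'.symm hl))
        · exact .inr (.inr (.branches h.symm h'))
      · exact .inr (.inr (.deg h))
  exact fun σ τ => key (msize σ + msize τ) σ τ le_rfl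

/-- The reflexive closure `≼`. -/
def MagmaLe (d : E → ℕ) (σ τ : FreeMagma E) : Prop := MagmaLt d σ τ ∨ σ = τ

lemma MagmaLe.refl (σ : FreeMagma E) : MagmaLe d σ σ := Or.inr rfl

lemma le_of_lt' {σ τ : FreeMagma E} (h : MagmaLt d σ τ) : MagmaLe d σ τ := Or.inl h

lemma lt_of_le_of_lt' {σ τ ρ : FreeMagma E} (h : MagmaLe d σ τ) (h' : MagmaLt d τ ρ) :
    MagmaLt d σ ρ := by rcases h with h | rfl; exacts [magmaLt_trans h h', h']

lemma lt_of_lt_of_le' {σ τ ρ : FreeMagma E} (h : MagmaLt d σ τ) (h' : MagmaLe d τ ρ) :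
    MagmaLt d σ ρ := by rcases h' with h' | rfl; exacts [magmaLt_trans h h', h]

lemma MagmaLe.trans' {σ τ ρ : FreeMagma E} (h : MagmaLe d σ τ) (h' : MagmaLe d τ ρ) :
    MagmaLe d σ ρ := by
  rcases h with h | rfl
  · exact Or.inl (lt_of_lt_of_le' h h')
  · exact h'

lemma mdeg_le_of_le {σ τ : FreeMagma E} (h : MagmaLe d σ τ) : mdeg d σ ≤ mdeg d τ := by
  rcases h with h | rfl
  · exact mdeg_le_of_lt h
  · exact le_rfl

lemma nbranch_le_of_le {σ τ : FreeMagma E} (h : MagmaLe d σ τ)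
    (hdeg : mdeg d σ = mdeg d τ) : nbranch σ ≤ nbranch τ := by
  rcases h with h | rfl
  · exact nbranch_le_of_lt h hdeg
  · exact le_rfl

lemma lt_mul_left {σ τ ρ : FreeMagma E} (h : MagmaLt d τ ρ) :
    MagmaLt d (σ * τ) (σ * ρ) := by
  cases h with
  | deg h => exact .deg (by simp; omega)
  | branches h h' => exact .branches (by simp; omega) (by simp; omega)
  | lex h h' hl =>
    exact .lex (by simp; omega) (by simp; omega) (by simpa using List.Lex.cons hl)
  | root h h' hl hr =>
    exact .root (by simp; omega) (by simp; omega) (by simp [hl]) (by simpa)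

lemma lt_mul_right {σ τ ρ : FreeMagma E} (h : MagmaLt d σ τ) :
    MagmaLt d (σ * ρ) (τ * ρ) := by
  have hle := mdeg_le_of_lt h
  rcases lt_or_eq_of_le hle with hlt | heq
  · exact .deg (by simp; omega)
  · exact .lex (by simp; omega) (by simp) (by simpa using List.Lex.rel h)

lemma le_mul_left {σ τ ρ : FreeMagma E} (h : MagmaLe d τ ρ) :
    MagmaLe d (σ * τ) (σ * ρ) := by
  rcases h with h | rfl
  · exact Or.inl (lt_mul_left h)
  · exact Or.inr rfl

lemma le_mul_right {σ τ ρ : FreeMagma E} (h : MagmaLe d σ τ) :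
    MagmaLe d (σ * ρ) (τ * ρ) := by
  rcases h with h | rfl
  · exact Or.inl (lt_mul_right h)
  · exact Or.inr rfl

lemma le_mul_mul {σ τ σ' τ' : FreeMagma E} (h : MagmaLe d σ σ') (h' : MagmaLe d τ τ') :
    MagmaLe d (σ * τ) (σ' * τ') :=
  MagmaLe.trans' (le_mul_right h) (le_mul_left h')

lemma mdeg_pos (hd : ∀ a : E, 1 ≤ d a) (σ : FreeMagma E) : 1 ≤ mdeg d σ := by
  induction σ with
  | ih1 a => simpa using hd a
  | ih2 x y ihx ihy => simp; omega

lemma finite_mdeg_le (hd : ∀ a : E, 1 ≤ d a) (hfib : ∀ n : ℕ, {a : E | d a = n}.Finite) :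
    ∀ n : ℕ, {σ : FreeMagma E | mdeg d σ ≤ n}.Finite := by
  have hfibs : ∀ m : ℕ, {a : E | d a ≤ m}.Finite := by
    intro m
    refine Set.Finite.subset (Set.Finite.biUnion (Set.finite_Iic m)
      (fun k _ => hfib k)) ?_
    intro a ha
    simp only [Set.mem_iUnion]
    exact ⟨d a, by simpa using ha, rfl⟩
  intro n
  induction n using Nat.strong_induction_on with
  | _ n ih =>
    cases n with
    | zero =>
      refine Set.Finite.subset Set.finite_empty ?_
      intro σ hσ
      have := mdeg_pos hd σ
      simp only [Set.mem_setOf_eq] at hσ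
      omega
    | succ n =>
      refine Set.Finite.subset (Set.Finite.union
        ((hfibs (n+1)).image FreeMagma.of)
        (Set.Finite.image2 (· * ·) (ih n (by omega)) (ih n (by omega)))) ?_
      intro σ hσ
      simp only [Set.mem_setOf_eq] at hσ
      cases σ with
      | of a => exact Or.inl ⟨a, by simpa using hσ, rfl⟩
      | mul x y =>
        right
        have hx := mdeg_pos hd x
        have hy := mdeg_pos hd y
        simp only [mul_def', mdeg_mul] at hσ
        exact ⟨x, by simp only [Set.mem_setOf_eq]; omega,
               y, by simp only [Set.mem_setOf_eq]; omega, rfl⟩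

lemma magmaLt_wf (hd : ∀ a : E, 1 ≤ d a) (hfib : ∀ n : ℕ, {a : E | d a = n}.Finite) :
    WellFounded (fun σ τ : FreeMagma E => MagmaLt d σ τ) := by
  have hfin : ∀ σ : FreeMagma E, {τ | MagmaLt d τ σ}.Finite := fun σ =>
    (finite_mdeg_le hd hfib (mdeg d σ)).subset (fun τ hτ => mdeg_le_of_lt hτ)
  have hcard : ∀ {σ τ : FreeMagma E}, MagmaLt d σ τ →
      (hfin σ).toFinset.card < (hfin τ).toFinset.card := by
    intro σ τ h
    apply Finset.card_lt_card
    rw [Finset.ssubset_def]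
    constructor
    · intro ρ hρ
      simp only [Set.Finite.mem_toFinset, Set.mem_setOf_eq] at *
      exact magmaLt_trans hρ h
    · intro hsub
      have hσ : σ ∈ (hfin τ).toFinset := by
        simp only [Set.Finite.mem_toFinset, Set.mem_setOf_eq]; exact h
      have := hsub hσ
      simp only [Set.Finite.mem_toFinset, Set.mem_setOf_eq] at this
      exact magmaLt_irrefl σ this
  exact Subrelation.wf (fun {σ τ} h => hcard h)
    (InvImage.wf (fun σ => (hfin σ).toFinset.card) Nat.lt_wfRel.wf)

end PreLie
namespace PreLie
open FreeMagma MonoidAlgebra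

variable {E : Type*} [LinearOrder E] {d : E → ℕ}
set_option linter.unusedSectionVars false

local notation "AA" => FreeNonUnitalNonAssocAlgebra ℚ E

lemma mul_inj_iff {x y x' y' : FreeMagma E} : x * y = x' * y' ↔ x = x' ∧ y = y' := by
  constructor
  · intro h
    have h' : FreeMagma.mul x y = FreeMagma.mul x' y' := h
    cases h'; exact ⟨rfl, rfl⟩
  · rintro ⟨rfl, rfl⟩; rfl

lemma hnb_mul {x y : FreeMagma E} : HasNondecreasingBranches d (x * y) ↔
    (HasNondecreasingBranches d x ∧ HasNondecreasingBranches d y ∧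
      ∀ u v : FreeMagma E, y = u * v → (MagmaLt d x u ∨ x = u)) := Iff.rfl

lemma hnb_of (a : E) : HasNondecreasingBranches d (FreeMagma.of a) := trivial

lemma hnb_mul_of {x : FreeMagma E} (hx : HasNondecreasingBranches d x) (a : E) :
    HasNondecreasingBranches d (x * FreeMagma.of a) :=
  ⟨hx, trivial, fun u v h => by cases h⟩

lemma hnb_mul_mul {x u v : FreeMagma E} (hx : HasNondecreasingBranches d x)
    (huv : HasNondecreasingBranches d (u * v)) (hle : MagmaLe d x u) :
    HasNondecreasingBranches d (x * (u * v)) :=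
  ⟨hx, huv, fun u' v' h => by
    rw [mul_inj_iff] at h
    rcases hle with h' | h'
    · exact Or.inl (h.1 ▸ h')
    · exact Or.inr (h.1 ▸ h')⟩

/-! ### MonoidAlgebra multiplication basics -/

lemma single_one_mul_eq_mapDomain (σ : FreeMagma E) (f : AA) :
    (MonoidAlgebra.single σ (1:ℚ) * f).coeff = Finsupp.mapDomain (fun τ => σ * τ) f.coeff := by
  rw [MonoidAlgebra.mul_def, MonoidAlgebra.sum_single_index (by simp)]
  simp only [one_mul, MonoidAlgebra.coeff_finsuppSum, MonoidAlgebra.coeff_single]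
  rfl

lemma mul_single_one_eq_mapDomain (σ : FreeMagma E) (f : AA) :
    (f * MonoidAlgebra.single σ (1:ℚ)).coeff = Finsupp.mapDomain (fun τ => τ * σ) f.coeff := by
  rw [MonoidAlgebra.mul_def, MonoidAlgebra.coeff_finsuppSum]
  unfold Finsupp.mapDomain
  congr 1
  ext τ c
  rw [MonoidAlgebra.sum_single_index (by simp)]
  simp

lemma isMaxTerm_single_one_mul {f : AA} {z : FreeMagma E}
    (h : IsMaxTermWrt d f z) (σ : FreeMagma E) :
    IsMaxTermWrt d (MonoidAlgebra.single σ (1:ℚ) * f) (σ * z) := by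
  have hinj : Function.Injective (fun τ : FreeMagma E => σ * τ) := by
    intro a b hab; exact (mul_inj_iff.mp hab).2
  have hsupp : (MonoidAlgebra.single σ (1:ℚ) * f).coeff.support =
      f.coeff.support.image (fun τ => σ * τ) := by
    rw [single_one_mul_eq_mapDomain, Finsupp.mapDomain_support_of_injective hinj]
  constructor
  · rw [hsupp, Finset.mem_image]
    exact ⟨z, h.1, rfl⟩
  · intro w hw hne
    rw [hsupp, Finset.mem_image] at hw
    obtain ⟨τ, hτ, rfl⟩ := hw
    have : τ ≠ z := fun h' => hne (by rw [h'])
    exact lt_mul_left (h.2 τ hτ this)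

lemma isMaxTerm_mul_single_one {f : AA} {z : FreeMagma E}
    (h : IsMaxTermWrt d f z) (σ : FreeMagma E) :
    IsMaxTermWrt d (f * MonoidAlgebra.single σ (1:ℚ)) (z * σ) := by
  have hinj : Function.Injective (fun τ : FreeMagma E => τ * σ) := by
    intro a b hab; exact (mul_inj_iff.mp hab).1
  have hsupp : (f * MonoidAlgebra.single σ (1:ℚ)).coeff.support =
      f.coeff.support.image (fun τ => τ * σ) := by
    rw [mul_single_one_eq_mapDomain, Finsupp.mapDomain_support_of_injective hinj]
  constructor
  · rw [hsupp, Finset.mem_image]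
    exact ⟨z, h.1, rfl⟩
  · intro w hw hne
    rw [hsupp, Finset.mem_image] at hw
    obtain ⟨τ, hτ, rfl⟩ := hw
    have : τ ≠ z := fun h' => hne (by rw [h'])
    exact lt_mul_right (h.2 τ hτ this)

/-! ### The ideal -/

lemma mem_twoSidedIdealGen {S : Set AA} {x : AA} :
    x ∈ twoSidedIdealGen S ↔ ∀ I, IsTwoSidedIdealSubmodule I → S ⊆ I → x ∈ I := by
  rw [twoSidedIdealGen, Submodule.mem_sInf]
  constructor
  · intro h I hI hS; exact h I ⟨hI, hS⟩
  · intro h I hI; exact h I hI.1 hI.2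

lemma twoSidedIdealGen_isIdeal (S : Set AA) :
    IsTwoSidedIdealSubmodule (twoSidedIdealGen S) := by
  intro a x hx
  constructor
  · rw [mem_twoSidedIdealGen]
    intro I hI hS
    exact (hI a x (mem_twoSidedIdealGen.mp hx I hI hS)).1
  · rw [mem_twoSidedIdealGen]
    intro I hI hS
    exact (hI a x (mem_twoSidedIdealGen.mp hx I hI hS)).2

lemma subset_twoSidedIdealGen (S : Set AA) : S ⊆ twoSidedIdealGen S := by
  intro s hs
  rw [SetLike.mem_coe, mem_twoSidedIdealGen]
  intro I _ hS
  exact hS hs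

/-! ### The generator elements -/

/-- The pre-Lie associator on monomials, as an algebra element. -/
noncomputable def genElt (x u v : FreeMagma E) : AA :=
  MonoidAlgebra.single (x * (u * v)) (1:ℚ) - MonoidAlgebra.single ((x * u) * v) 1
    - MonoidAlgebra.single (u * (x * v)) 1 + MonoidAlgebra.single ((u * x) * v) 1

lemma genElt_mem (x u v : FreeMagma E) : genElt x u v ∈ twoSidedIdealGen (preLieAssocSet E) := by
  apply subset_twoSidedIdealGen
  refine ⟨MonoidAlgebra.single x 1, MonoidAlgebra.single u 1, MonoidAlgebra.single v 1, ?_⟩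
  simp only [MonoidAlgebra.single_mul_single, one_mul, genElt]

lemma ne_t2 (x u v : FreeMagma E) : x * (u * v) ≠ (x * u) * v := by
  intro h
  have := congrArg nbranch h
  simp at this

lemma ne_t4 (x u v : FreeMagma E) : x * (u * v) ≠ (u * x) * v := by
  intro h
  have := congrArg nbranch h
  simp at this

lemma ne_t3 {x u : FreeMagma E} (v : FreeMagma E) (hxu : x ≠ u) :
    x * (u * v) ≠ u * (x * v) := by
  intro h
  exact hxu (mul_inj_iff.mp h).1

lemma genElt_isMaxTerm {x u : FreeMagma E} (v : FreeMagma E) (hlt : MagmaLt d u x) :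
    IsMaxTermWrt d (genElt x u v) (x * (u * v)) := by
  have hxu : x ≠ u := fun h => magmaLt_irrefl u (h ▸ hlt)
  have h2 := ne_t2 x u v
  have h3 := ne_t3 v hxu
  have h4 := ne_t4 x u v
  have hcoeff : (genElt x u v).coeff (x * (u * v)) = 1 := by
    simp only [genElt, MonoidAlgebra.coeff_add, MonoidAlgebra.coeff_sub, MonoidAlgebra.coeff_single]
    rw [Finsupp.add_apply, Finsupp.sub_apply, Finsupp.sub_apply, Finsupp.single_eq_same,
      Finsupp.single_eq_of_ne' (Ne.symm h2), Finsupp.single_eq_of_ne' (Ne.symm h3),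
      Finsupp.single_eq_of_ne' (Ne.symm h4)]
    norm_num
  constructor
  · rw [Finsupp.mem_support_iff, hcoeff]; norm_num
  · intro w hw hne
    have hsub : (genElt x u v).coeff.support ⊆
        {x * (u * v), (x * u) * v, u * (x * v), (u * x) * v} := by
      intro τ hτ
      rw [Finsupp.mem_support_iff] at hτ
      by_contra hmem
      simp only [Finset.mem_insert, Finset.mem_singleton, not_or] at hmem
      apply hτ
      simp only [genElt, MonoidAlgebra.coeff_add, MonoidAlgebra.coeff_sub, MonoidAlgebra.coeff_single]
      rw [Finsupp.add_apply, Finsupp.sub_apply, Finsupp.sub_apply,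
        Finsupp.single_eq_of_ne' (fun h => hmem.1 h.symm),
        Finsupp.single_eq_of_ne' (fun h => hmem.2.1 h.symm),
        Finsupp.single_eq_of_ne' (fun h => hmem.2.2.1 h.symm),
        Finsupp.single_eq_of_ne' (fun h => hmem.2.2.2 h.symm)]
      ring
    have hw' := hsub hw
    simp only [Finset.mem_insert, Finset.mem_singleton] at hw'
    rcases hw' with rfl | rfl | rfl | rfl
    · exact absurd rfl hne
    · exact .branches (by simp; omega) (by simp)
    · exact .lex (by simp; omega) (by simp) (by simpa using List.Lex.rel hlt)
    · exact .branches (by simp; omega) (by simp)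

/-- Direction 1: a monomial without nondecreasing branches is a maximal term. -/
lemma mem_maxTermSet_of_not_nondecr {σ : FreeMagma E}
    (h : ¬ HasNondecreasingBranches d σ) :
    σ ∈ maxTermSetWrt d (twoSidedIdealGen (preLieAssocSet E)) := by
  induction σ with
  | ih1 a => exact absurd (hnb_of a) h
  | ih2 x y ihx ihy =>
    by_cases hx : HasNondecreasingBranches d x
    · by_cases hy : HasNondecreasingBranches d y
      · -- root violation
        have : ¬ ∀ u v : FreeMagma E, y = u * v → (MagmaLt d x u ∨ x = u) := by
          intro hall; exact h ⟨hx, hy, hall⟩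
        push_neg at this
        obtain ⟨u, v, rfl, hnot⟩ := this
        have hlt : MagmaLt d u x := by
          rcases magmaLt_trichotomy (d := d) x u with h' | h' | h'
          · exact absurd h' hnot.1
          · exact absurd h' hnot.2
          · exact h'
        exact ⟨genElt x u v, genElt_mem x u v, genElt_isMaxTerm v hlt⟩
      · obtain ⟨f, hf, hmax⟩ := ihy hy
        exact ⟨MonoidAlgebra.single x 1 * f,
          ((twoSidedIdealGen_isIdeal _) _ f hf).1, isMaxTerm_single_one_mul hmax x⟩
    · obtain ⟨f, hf, hmax⟩ := ihx hx
      exact ⟨f * MonoidAlgebra.single y 1,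
        ((twoSidedIdealGen_isIdeal _) _ f hf).2, isMaxTerm_mul_single_one hmax y⟩

end PreLie
namespace PreLie
open FreeMagma

variable {E : Type*} [LinearOrder E]
set_option linter.unusedSectionVars false

local notation "AA" => ((FreeMagma E) →₀ ℚ)

variable (d : E → ℕ)

/-- guarded recursive call -/
noncomputable def gcall {p : FreeMagma E} (rec : ∀ q : FreeMagma E, MagmaLt d q p → AA)
    (q : FreeMagma E) : AA :=
  open Classical in if h : MagmaLt d q p then rec q h else 0

open Classical in
/-- One step of the normal-form recursion. -/
noncomputable def starF : ∀ p : FreeMagma E, (∀ q : FreeMagma E, MagmaLt d q p → AA) → AA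
  | .of _, _ => 0
  | .mul σ (.of a), _ =>
      if HasNondecreasingBranches d σ then Finsupp.single (σ * .of a) 1 else 0
  | .mul σ (.mul u v), rec =>
      if HasNondecreasingBranches d σ ∧ HasNondecreasingBranches d (u * v) then
        if MagmaLe d σ u then Finsupp.single (σ * (u * v)) 1
        else
          ((gcall d rec (σ * u)).sum fun ρ c => c • gcall d rec (ρ * v))
          + ((gcall d rec (σ * v)).sum fun ρ c => c • gcall d rec (u * ρ))
          - ((gcall d rec (u * σ)).sum fun ρ c => c • gcall d rec (ρ * v))
      else 0

variable (hd : ∀ a : E, 1 ≤ d a) (hfib : ∀ n : ℕ, {a : E | d a = n}.Finite)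

/-- The normal form of the product of the two factors of `p`. -/
noncomputable def star (p : FreeMagma E) : AA :=
  WellFounded.fix (magmaLt_wf hd hfib) (starF d) p

lemma star_eq (p : FreeMagma E) :
    star d hd hfib p = starF d p (fun q _ => star d hd hfib q) := by
  exact WellFounded.fix_eq _ _ _

lemma star_of (a : E) : star d hd hfib (.of a) = 0 := by
  rw [star_eq]; rfl

/-- The fundamental invariant of `star`. -/
lemma star_good : ∀ p : FreeMagma E, ∀ ρ ∈ (star d hd hfib p).support,
    HasNondecreasingBranches d ρ ∧ MagmaLe d ρ p ∧ mdeg d ρ = mdeg d p := by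
  intro p
  induction p using WellFounded.induction (magmaLt_wf hd hfib) with
  | _ p ih =>
  intro ρ hρ
  rw [star_eq] at hρ
  match p with
  | .of a => simp [starF] at hρ
  | .mul σ (.of a) =>
    rw [starF] at hρ
    split at hρ
    case isTrue hσ =>
      rw [Finsupp.support_single_ne_zero _ (by norm_num : (1:ℚ) ≠ 0)] at hρ
      rcases Finset.mem_singleton.mp hρ with rfl
      exact ⟨hnb_mul_of hσ a, Or.inr rfl, rfl⟩
    case isFalse => simp at hρ
  | .mul σ (.mul u v) =>
    rw [starF] at hρ
    split at hρ
    case isFalse => simp at hρ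
    case isTrue hnd =>
    split at hρ
    case isTrue hle =>
      rw [Finsupp.support_single_ne_zero _ (by norm_num : (1:ℚ) ≠ 0)] at hρ
      rcases Finset.mem_singleton.mp hρ with rfl
      exact ⟨hnb_mul_mul hnd.1 hnd.2 hle, Or.inr rfl, rfl⟩
    case isFalse hgt =>
      have key : ∀ (f : AA) (g : FreeMagma E → FreeMagma E),
          (∀ τ ∈ f.support, mdeg d (g τ) = mdeg d (σ.mul (u.mul v))) →
          ρ ∈ (f.sum fun τ c => c • gcall d (p := σ.mul (u.mul v)) (fun q _ => star d hd hfib q) (g τ)).support →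
          HasNondecreasingBranches d ρ ∧ MagmaLe d ρ (σ.mul (u.mul v)) ∧
            mdeg d ρ = mdeg d (σ.mul (u.mul v)) := by
        intro f g hdeg hmem
        have hbi := Finsupp.support_sum hmem
        rw [Finset.mem_biUnion] at hbi
        obtain ⟨τ, hτ, hρ'⟩ := hbi
        have hρ'' := Finsupp.support_smul hρ'
        unfold gcall at hρ''
        split at hρ''
        case isFalse => simp at hρ''
        case isTrue hlt =>
          obtain ⟨h1, h2, h3⟩ := ih (g τ) hlt ρ hρ''
          exact ⟨h1, MagmaLe.trans' h2 (Or.inl hlt), h3.trans (hdeg τ hτ)⟩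
      -- outer guards
      have hvpos := mdeg_pos hd v
      have hupos := mdeg_pos hd u
      have hσpos := mdeg_pos hd σ
      have hlt1 : MagmaLt d (σ * u) (σ.mul (u.mul v)) := .deg (by simp [mul_def']; omega)
      have hlt2 : MagmaLt d (σ * v) (σ.mul (u.mul v)) := .deg (by simp [mul_def']; omega)
      have hlt3 : MagmaLt d (u * σ) (σ.mul (u.mul v)) := .deg (by simp [mul_def']; omega)
      have hg1 : gcall d (fun (q : FreeMagma E) _ => star d hd hfib q) (σ * u)
          = star d hd hfib (σ * u) := dif_pos hlt1
      have hg2 : gcall d (fun (q : FreeMagma E) _ => star d hd hfib q) (σ * v)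
          = star d hd hfib (σ * v) := dif_pos hlt2
      have hg3 : gcall d (fun (q : FreeMagma E) _ => star d hd hfib q) (u * σ)
          = star d hd hfib (u * σ) := dif_pos hlt3
      rw [hg1, hg2, hg3] at hρ
      classical
      have hmem := Finsupp.support_sub (ι := FreeMagma E) (hρ)
      rcases Finset.mem_union.mp hmem with hmem' | hmem'
      · rcases Finset.mem_union.mp (Finsupp.support_add hmem') with hm | hm
        · refine key _ (fun τ => τ * v) ?_ hm
          intro τ hτ
          have h3 := (ih (σ * u) hlt1 τ hτ).2.2
          simp only [mul_def', mdeg_mul] at h3 ⊢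
          omega
        · refine key _ (fun τ => u * τ) ?_ hm
          intro τ hτ
          have h3 := (ih (σ * v) hlt2 τ hτ).2.2
          simp only [mul_def', mdeg_mul] at h3 ⊢
          omega
      · refine key _ (fun τ => τ * v) ?_ hmem'
        intro τ hτ
        have h3 := (ih (u * σ) hlt3 τ hτ).2.2
        simp only [mul_def', mdeg_mul] at h3 ⊢
        omega

/-! ### Clean equations for `star` -/

lemma star_mul_of {σ : FreeMagma E} (hσ : HasNondecreasingBranches d σ) (a : E) :
    star d hd hfib (σ * .of a) = Finsupp.single (σ * .of a) 1 := by
  rw [star_eq]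
  show starF d (σ.mul (.of a)) _ = _
  rw [starF, if_pos hσ]

lemma star_mul_le {σ u v : FreeMagma E} (hσ : HasNondecreasingBranches d σ)
    (huv : HasNondecreasingBranches d (u * v)) (hle : MagmaLe d σ u) :
    star d hd hfib (σ * (u * v)) = Finsupp.single (σ * (u * v)) 1 := by
  rw [star_eq]
  show starF d (σ.mul (u.mul v)) _ = _
  rw [starF, if_pos ⟨hσ, huv⟩, if_pos hle]

lemma star_mul_gt {σ u v : FreeMagma E} (hσ : HasNondecreasingBranches d σ)
    (huv : HasNondecreasingBranches d (u * v)) (hgt : MagmaLt d u σ) :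
    star d hd hfib (σ * (u * v)) =
      ((star d hd hfib (σ * u)).sum fun ρ c => c • star d hd hfib (ρ * v))
      + ((star d hd hfib (σ * v)).sum fun ρ c => c • star d hd hfib (u * ρ))
      - ((star d hd hfib (u * σ)).sum fun ρ c => c • star d hd hfib (ρ * v)) := by
  have hnle : ¬ MagmaLe d σ u := by
    rintro (h | rfl)
    · exact magmaLt_irrefl σ (magmaLt_trans h hgt)
    · exact magmaLt_irrefl σ hgt
  have hvpos := mdeg_pos hd v
  have hupos := mdeg_pos hd u
  have hσpos := mdeg_pos hd σ
  have hlt1 : MagmaLt d (σ * u) (σ * (u * v)) := .deg (by simp; omega)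
  have hlt2 : MagmaLt d (σ * v) (σ * (u * v)) := .deg (by simp; omega)
  have hlt3 : MagmaLt d (u * σ) (σ * (u * v)) := .deg (by simp; omega)
  have hb : nbranch (σ * (u * v)) = nbranch v + 2 := by simp
  -- inner guards: anything in the support of star (σ*u), star (u*σ) star-multiplied by v
  have hguard1 : ∀ q₀ : FreeMagma E, mdeg d q₀ = mdeg d σ + mdeg d u →
      ∀ ρ ∈ (star d hd hfib q₀).support, MagmaLt d (ρ * v) (σ * (u * v)) := by
    intro q₀ hq ρ hρ
    have h3 := (star_good d hd hfib q₀ ρ hρ).2.2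
    refine .branches (by simp only [mdeg_mul]; omega) (by simp only [nbranch_mul]; omega)
  have hguard2 : ∀ ρ ∈ (star d hd hfib (σ * v)).support,
      MagmaLt d (u * ρ) (σ * (u * v)) := by
    intro ρ hρ
    obtain ⟨_, h2, h3⟩ := star_good d hd hfib (σ * v) ρ hρ
    simp only [mdeg_mul] at h3
    have hbρ : nbranch ρ ≤ nbranch (σ * v) := nbranch_le_of_le h2 (by simp; omega)
    simp only [nbranch_mul] at hbρ
    rcases lt_or_eq_of_le hbρ with hblt | hbeq
    · exact .branches (by simp only [mdeg_mul]; omega) (by simp only [nbranch_mul]; omega)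
    · refine .lex (by simp only [mdeg_mul]; omega) (by simp only [nbranch_mul]; omega) ?_
      simp only [branchList_mul]
      exact List.Lex.rel hgt
  rw [star_eq]
  show starF d (σ.mul (u.mul v)) _ = _
  rw [starF, if_pos ⟨hσ, huv⟩, if_neg hnle]
  have hg1 : gcall d (fun (q : FreeMagma E) _ => star d hd hfib q) (σ * u)
      = star d hd hfib (σ * u) := dif_pos hlt1
  have hg2 : gcall d (fun (q : FreeMagma E) _ => star d hd hfib q) (σ * v)
      = star d hd hfib (σ * v) := dif_pos hlt2
  have hg3 : gcall d (fun (q : FreeMagma E) _ => star d hd hfib q) (u * σ)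
      = star d hd hfib (u * σ) := dif_pos hlt3
  rw [hg1, hg2, hg3]
  congr 1
  · congr 1
    · apply Finsupp.sum_congr
      intro ρ hρ
      congr 1
      exact dif_pos (hguard1 (σ * u) (by simp) ρ hρ)
    · apply Finsupp.sum_congr
      intro ρ hρ
      congr 1
      exact dif_pos (hguard2 ρ hρ)
  · apply Finsupp.sum_congr
    intro ρ hρ
    congr 1
    exact dif_pos (hguard1 (u * σ) (by simp; omega) ρ hρ)

end PreLie
namespace PreLie
open FreeMagma MonoidAlgebra

variable {E : Type*} [LinearOrder E]
set_option linter.unusedSectionVars false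
set_option maxHeartbeats 1000000

local notation "AA" => ((FreeMagma E) →₀ ℚ)

variable (d : E → ℕ) (hd : ∀ a : E, 1 ≤ d a) (hfib : ∀ n : ℕ, {a : E | d a = n}.Finite)

noncomputable def innerSL (σ : FreeMagma E) : AA →ₗ[ℚ] AA :=
  Finsupp.lsum ℚ fun τ => LinearMap.toSpanSingleton ℚ AA (star d hd hfib (σ * τ))

noncomputable def SL : AA →ₗ[ℚ] AA →ₗ[ℚ] AA :=
  Finsupp.lsum ℚ fun σ => LinearMap.toSpanSingleton ℚ (AA →ₗ[ℚ] AA) (innerSL d hd hfib σ)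

lemma innerSL_single (σ τ : FreeMagma E) (b : ℚ) :
    innerSL d hd hfib σ (Finsupp.single τ b) = b • star d hd hfib (σ * τ) := by
  rw [innerSL, Finsupp.lsum_single, LinearMap.toSpanSingleton_apply]

lemma innerSL_apply (σ : FreeMagma E) (g : AA) :
    innerSL d hd hfib σ g = g.sum fun τ b => b • star d hd hfib (σ * τ) := by
  rw [innerSL, Finsupp.lsum_apply]
  apply Finsupp.sum_congr
  intro τ _
  rw [LinearMap.toSpanSingleton_apply]

lemma SL_single (σ : FreeMagma E) (a : ℚ) (g : AA) :
    SL d hd hfib (Finsupp.single σ a) g = a • innerSL d hd hfib σ g := by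
  rw [SL, Finsupp.lsum_single, LinearMap.toSpanSingleton_apply,
    LinearMap.smul_apply]

lemma SL_single_single (σ τ : FreeMagma E) (a b : ℚ) :
    SL d hd hfib (Finsupp.single σ a) (Finsupp.single τ b) =
      (a * b) • star d hd hfib (σ * τ) := by
  rw [SL_single, innerSL_single, smul_smul]

lemma SL_one_one (σ τ : FreeMagma E) :
    SL d hd hfib (Finsupp.single σ 1) (Finsupp.single τ 1) =
      star d hd hfib (σ * τ) := by
  rw [SL_single_single]; norm_num

lemma SL_apply (f g : AA) :
    SL d hd hfib f g = f.sum fun σ c => c • innerSL d hd hfib σ g := by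
  rw [SL, Finsupp.lsum_apply, Finsupp.sum, Finsupp.sum, LinearMap.sum_apply]
  apply Finset.sum_congr rfl
  intro σ _
  rw [LinearMap.toSpanSingleton_apply, LinearMap.smul_apply]

/-- decomposition in the first slot -/
lemma SL_dec1 (f g : AA) :
    SL d hd hfib f g = f.sum fun w c => c • SL d hd hfib (Finsupp.single w 1) g := by
  rw [SL_apply]
  apply Finsupp.sum_congr
  intro w _
  rw [SL_single, one_smul]

/-- decomposition in the second slot -/
lemma SL_dec2 (f g : AA) :
    SL d hd hfib f g = g.sum fun w c => c • SL d hd hfib f (Finsupp.single w 1) := by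
  conv_lhs => rw [← Finsupp.sum_single g]
  rw [map_finsuppSum]
  apply Finsupp.sum_congr
  intro w hw
  have : (Finsupp.single w (g w) : AA) = g w • Finsupp.single w 1 := by
    rw [Finsupp.smul_single, smul_eq_mul, mul_one]
  rw [this, map_smul]

/-- support bound for `SL` -/
lemma SL_good {f g : AA} {p q : FreeMagma E}
    (hf : ∀ ρ ∈ f.support, HasNondecreasingBranches d ρ ∧ MagmaLe d ρ p ∧ mdeg d ρ = mdeg d p)
    (hg : ∀ ρ ∈ g.support, HasNondecreasingBranches d ρ ∧ MagmaLe d ρ q ∧ mdeg d ρ = mdeg d q) :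
    ∀ ρ ∈ (SL d hd hfib f g).support, HasNondecreasingBranches d ρ ∧
      MagmaLe d ρ (p * q) ∧ mdeg d ρ = mdeg d p + mdeg d q := by
  intro ρ hρ
  rw [SL_apply] at hρ
  have h1 := Finsupp.support_sum hρ
  rw [Finset.mem_biUnion] at h1
  obtain ⟨σ, hσ, hρ1⟩ := h1
  have hρ2 := Finsupp.support_smul hρ1
  rw [innerSL_apply] at hρ2
  have h2 := Finsupp.support_sum hρ2
  rw [Finset.mem_biUnion] at h2
  obtain ⟨τ, hτ, hρ3⟩ := h2
  have hρ4 := Finsupp.support_smul hρ3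
  obtain ⟨hn, hle, hdeg⟩ := star_good d hd hfib (σ * τ) ρ hρ4
  obtain ⟨_, hleσ, hdegσ⟩ := hf σ hσ
  obtain ⟨_, hleτ, hdegτ⟩ := hg τ hτ
  refine ⟨hn, MagmaLe.trans' hle (le_mul_mul hleσ hleτ), ?_⟩
  simp only [mdeg_mul] at hdeg
  omega

/-! ### The normal form -/

noncomputable def NF : FreeMagma E → AA
  | .of a => Finsupp.single (.of a) 1
  | .mul x y => SL d hd hfib (NF x) (NF y)

lemma NF_good : ∀ z : FreeMagma E, ∀ ρ ∈ (NF d hd hfib z).support,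
    HasNondecreasingBranches d ρ ∧ MagmaLe d ρ z ∧ mdeg d ρ = mdeg d z := by
  intro z
  induction z with
  | ih1 a =>
    intro ρ hρ
    rw [NF, Finsupp.support_single_ne_zero _ (by norm_num : (1:ℚ) ≠ 0)]
      at hρ
    rcases Finset.mem_singleton.mp hρ with rfl
    exact ⟨hnb_of a, Or.inr rfl, rfl⟩
  | ih2 x y ihx ihy =>
    intro ρ hρ
    rw [show NF d hd hfib (x * y) = SL d hd hfib (NF d hd hfib x) (NF d hd hfib y) from rfl]
      at hρ
    exact SL_good d hd hfib ihx ihy ρ hρ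

lemma NF_mul (x y : FreeMagma E) :
    NF d hd hfib (x * y) = SL d hd hfib (NF d hd hfib x) (NF d hd hfib y) := rfl

lemma NF_nondecr {z : FreeMagma E} (hz : HasNondecreasingBranches d z) :
    NF d hd hfib z = Finsupp.single z 1 := by
  induction z with
  | ih1 a => rfl
  | ih2 x y ihx ihy =>
    obtain ⟨hx, hy, hcond⟩ := hnb_mul.mp hz
    rw [NF_mul, ihx hx, ihy hy, SL_one_one]
    cases y with
    | of a => exact star_mul_of d hd hfib hx a
    | mul u v =>
      simp only [mul_def'] at *
      rcases hcond u v rfl with h | h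
      · exact star_mul_le d hd hfib hx hy (Or.inl h)
      · exact star_mul_le d hd hfib hx hy (Or.inr h)

/-! ### The projection `phi` -/

noncomputable def phi : AA →ₗ[ℚ] AA :=
  Finsupp.lsum ℚ fun z => LinearMap.toSpanSingleton ℚ AA (NF d hd hfib z)

lemma phi_single (z : FreeMagma E) (c : ℚ) :
    phi d hd hfib (Finsupp.single z c) = c • NF d hd hfib z := by
  rw [phi, Finsupp.lsum_single, LinearMap.toSpanSingleton_apply]

lemma phi_good (f : AA) : ∀ ρ ∈ (phi d hd hfib f).support, HasNondecreasingBranches d ρ := by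
  intro ρ hρ
  rw [phi, Finsupp.lsum_apply] at hρ
  have h1 := Finsupp.support_sum hρ
  rw [Finset.mem_biUnion] at h1
  obtain ⟨z, hz, hρ1⟩ := h1
  rw [LinearMap.toSpanSingleton_apply] at hρ1
  have hρ2 := Finsupp.support_smul hρ1
  exact (NF_good d hd hfib z ρ hρ2).1

lemma phi_mul (f g : FreeNonUnitalNonAssocAlgebra ℚ E) :
    phi d hd hfib (f * g).coeff = SL d hd hfib (phi d hd hfib f.coeff) (phi d hd hfib g.coeff) := by
  induction f using MonoidAlgebra.induction_linear with
  | zero => simp only [zero_mul, MonoidAlgebra.coeff_zero, map_zero, LinearMap.zero_apply]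
  | add f₁ f₂ h1 h2 => simp only [add_mul, MonoidAlgebra.coeff_add, map_add, h1, h2, LinearMap.add_apply]
  | single σ a =>
    induction g using MonoidAlgebra.induction_linear with
    | zero => simp only [mul_zero, MonoidAlgebra.coeff_zero, map_zero]
    | add g₁ g₂ h1 h2 => simp only [mul_add, MonoidAlgebra.coeff_add, map_add, h1, h2]
    | single τ b =>
      rw [MonoidAlgebra.single_mul_single, MonoidAlgebra.coeff_single, MonoidAlgebra.coeff_single,
        MonoidAlgebra.coeff_single]
      rw [phi_single, phi_single, phi_single]
      rw [map_smul (SL d hd hfib) a (NF d hd hfib σ), LinearMap.smul_apply, map_smul]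
      rw [NF_mul, smul_smul]

lemma phi_apply_maxterm {f : FreeNonUnitalNonAssocAlgebra ℚ E} {σ : FreeMagma E} (hmax : IsMaxTermWrt d f σ)
    (hσ : HasNondecreasingBranches d σ) : (phi d hd hfib f.coeff) σ = f.coeff σ := by
  classical
  rw [phi, Finsupp.lsum_apply]
  rw [show ((f.coeff.sum fun z => LinearMap.toSpanSingleton ℚ AA (NF d hd hfib z)) : AA) σ
      = f.coeff.sum fun z c => (LinearMap.toSpanSingleton ℚ AA (NF d hd hfib z) c) σ from
    Finsupp.sum_apply]
  rw [Finsupp.sum]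
  rw [Finset.sum_eq_single σ]
  · rw [LinearMap.toSpanSingleton_apply, NF_nondecr d hd hfib hσ, Finsupp.smul_apply,
      Finsupp.single_eq_same, smul_eq_mul, mul_one]
  · intro z hz hne
    rw [LinearMap.toSpanSingleton_apply, Finsupp.smul_apply]
    have hzσ : MagmaLt d z σ := hmax.2 z hz hne
    have : (NF d hd hfib z) σ = 0 := by
      by_contra h
      have hmem : σ ∈ (NF d hd hfib z).support := Finsupp.mem_support_iff.mpr h
      have hle := (NF_good d hd hfib z σ hmem).2.1
      exact magmaLt_irrefl σ (lt_of_le_of_lt' hle hzσ)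
    rw [this, smul_zero]
  · intro h
    exact absurd hmax.1 h

end PreLie
namespace PreLie
open FreeMagma

variable {E : Type*} [LinearOrder E]
set_option linter.unusedSectionVars false
set_option maxHeartbeats 1600000

local notation "AA" => ((FreeMagma E) →₀ ℚ)

variable (d : E → ℕ) (hd : ∀ a : E, 1 ≤ d a) (hfib : ∀ n : ℕ, {a : E | d a = n}.Finite)

lemma SL_star_right (f : AA) (v : FreeMagma E) :
    SL d hd hfib f (Finsupp.single v 1) =
      f.sum fun w c => c • star d hd hfib (w * v) := by
  rw [SL_dec1]
  exact Finsupp.sum_congr fun w _ => by rw [SL_one_one]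

lemma SL_star_left (u : FreeMagma E) (g : AA) :
    SL d hd hfib (Finsupp.single u 1) g =
      g.sum fun w c => c • star d hd hfib (u * w) := by
  rw [SL_dec2]
  exact Finsupp.sum_congr fun w _ => by rw [SL_one_one]

lemma E1s {σ : FreeMagma E} (hσ : HasNondecreasingBranches d σ) (a : E) :
    SL d hd hfib (Finsupp.single σ 1) (Finsupp.single (FreeMagma.of a) 1) =
      Finsupp.single (σ * FreeMagma.of a) 1 := by
  rw [SL_one_one]
  exact star_mul_of d hd hfib hσ a

lemma E2s {σ u v : FreeMagma E} (hσ : HasNondecreasingBranches d σ)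
    (huv : HasNondecreasingBranches d (u * v)) (hle : MagmaLe d σ u) :
    SL d hd hfib (Finsupp.single σ 1) (Finsupp.single (u * v) 1) =
      Finsupp.single (σ * (u * v)) 1 := by
  rw [SL_one_one]
  exact star_mul_le d hd hfib hσ huv hle

lemma E3s {σ u v : FreeMagma E} (hσ : HasNondecreasingBranches d σ)
    (huv : HasNondecreasingBranches d (u * v)) (hgt : MagmaLt d u σ) :
    SL d hd hfib (Finsupp.single σ 1) (Finsupp.single (u * v) 1) =
      SL d hd hfib (SL d hd hfib (Finsupp.single σ 1) (Finsupp.single u 1))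
          (Finsupp.single v 1)
        + SL d hd hfib (Finsupp.single u 1)
            (SL d hd hfib (Finsupp.single σ 1) (Finsupp.single v 1))
        - SL d hd hfib (SL d hd hfib (Finsupp.single u 1) (Finsupp.single σ 1))
            (Finsupp.single v 1) := by
  rw [SL_one_one, star_mul_gt d hd hfib hσ huv hgt]
  rw [show ((star d hd hfib (σ * u)).sum fun ρ c => c • star d hd hfib (ρ * v))
      = SL d hd hfib (SL d hd hfib (Finsupp.single σ 1) (Finsupp.single u 1))
          (Finsupp.single v 1) by rw [SL_one_one, SL_star_right]]
  rw [show ((star d hd hfib (σ * v)).sum fun ρ c => c • star d hd hfib (u * ρ))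
      = SL d hd hfib (Finsupp.single u 1)
          (SL d hd hfib (Finsupp.single σ 1) (Finsupp.single v 1)) by
    rw [SL_one_one, SL_star_left]]
  rw [show ((star d hd hfib (u * σ)).sum fun ρ c => c • star d hd hfib (ρ * v))
      = SL d hd hfib (SL d hd hfib (Finsupp.single u 1) (Finsupp.single σ 1))
          (Finsupp.single v 1) by rw [SL_one_one, SL_star_right]]

lemma sum3_split (W : AA) (A B C : FreeMagma E → AA) :
    (W.sum fun w c => c • (A w + B w - C w)) =
      (W.sum fun w c => c • A w) + (W.sum fun w c => c • B w)
        - (W.sum fun w c => c • C w) := by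
  classical
  rw [Finsupp.sum, Finsupp.sum, Finsupp.sum, Finsupp.sum, ← Finset.sum_add_distrib,
    ← Finset.sum_sub_distrib]
  apply Finset.sum_congr rfl
  intro w _
  rw [smul_sub, smul_add]

lemma SL_left_sum (W : AA) (F : FreeMagma E → ℚ → AA) (g : AA) :
    SL d hd hfib (W.sum F) g = W.sum fun w c => SL d hd hfib (F w c) g := by
  have h := map_finsuppSum ((SL d hd hfib).flip g) W F
  simpa [LinearMap.flip_apply] using h

lemma SL_right_map (f : AA) (W : AA) (F : FreeMagma E → ℚ → AA) :
    SL d hd hfib f (W.sum F) = W.sum fun w c => SL d hd hfib f (F w c) :=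
  map_finsuppSum _ W F

/-- extension of the pre-Lie identity over the first argument of the inner product -/
lemma IHE (x₀ q : FreeMagma E) (W : AA)
    (hpt : ∀ w ∈ W.support,
      SL d hd hfib (Finsupp.single x₀ 1)
          (SL d hd hfib (Finsupp.single w 1) (Finsupp.single q 1)) =
        SL d hd hfib (SL d hd hfib (Finsupp.single x₀ 1) (Finsupp.single w 1))
            (Finsupp.single q 1)
          + SL d hd hfib (Finsupp.single w 1)
              (SL d hd hfib (Finsupp.single x₀ 1) (Finsupp.single q 1))
          - SL d hd hfib (SL d hd hfib (Finsupp.single w 1) (Finsupp.single x₀ 1))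
              (Finsupp.single q 1)) :
    SL d hd hfib (Finsupp.single x₀ 1) (SL d hd hfib W (Finsupp.single q 1)) =
      SL d hd hfib (SL d hd hfib (Finsupp.single x₀ 1) W) (Finsupp.single q 1)
        + SL d hd hfib W (SL d hd hfib (Finsupp.single x₀ 1) (Finsupp.single q 1))
        - SL d hd hfib (SL d hd hfib W (Finsupp.single x₀ 1)) (Finsupp.single q 1) := by
  have L : SL d hd hfib (Finsupp.single x₀ 1) (SL d hd hfib W (Finsupp.single q 1)) =
      W.sum fun w c => c • SL d hd hfib (Finsupp.single x₀ 1)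
        (SL d hd hfib (Finsupp.single w 1) (Finsupp.single q 1)) := by
    rw [SL_dec1 d hd hfib W (Finsupp.single q 1), SL_right_map]
    exact Finsupp.sum_congr fun w _ => map_smul _ _ _
  have R1 : SL d hd hfib (SL d hd hfib (Finsupp.single x₀ 1) W) (Finsupp.single q 1) =
      W.sum fun w c => c • SL d hd hfib
        (SL d hd hfib (Finsupp.single x₀ 1) (Finsupp.single w 1)) (Finsupp.single q 1) := by
    rw [SL_dec2 d hd hfib (Finsupp.single x₀ 1) W, SL_left_sum]
    exact Finsupp.sum_congr fun w _ => LinearMap.map_smul₂ _ _ _ _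
  have R2 : SL d hd hfib W (SL d hd hfib (Finsupp.single x₀ 1) (Finsupp.single q 1)) =
      W.sum fun w c => c • SL d hd hfib (Finsupp.single w 1)
        (SL d hd hfib (Finsupp.single x₀ 1) (Finsupp.single q 1)) :=
    SL_dec1 d hd hfib W _
  have R3 : SL d hd hfib (SL d hd hfib W (Finsupp.single x₀ 1)) (Finsupp.single q 1) =
      W.sum fun w c => c • SL d hd hfib
        (SL d hd hfib (Finsupp.single w 1) (Finsupp.single x₀ 1)) (Finsupp.single q 1) := by
    rw [SL_dec1 d hd hfib W (Finsupp.single x₀ 1), SL_left_sum]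
    exact Finsupp.sum_congr fun w _ => LinearMap.map_smul₂ _ _ _ _
  rw [L, R1, R2, R3, ← sum3_split]
  exact Finsupp.sum_congr fun w hw => by rw [hpt w hw]

/-- extension of the pre-Lie identity over the second argument of the inner product -/
lemma IHE2 (x₀ s : FreeMagma E) (W : AA)
    (hpt : ∀ w ∈ W.support,
      SL d hd hfib (Finsupp.single x₀ 1)
          (SL d hd hfib (Finsupp.single s 1) (Finsupp.single w 1)) =
        SL d hd hfib (SL d hd hfib (Finsupp.single x₀ 1) (Finsupp.single s 1))
            (Finsupp.single w 1)
          + SL d hd hfib (Finsupp.single s 1)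
              (SL d hd hfib (Finsupp.single x₀ 1) (Finsupp.single w 1))
          - SL d hd hfib (SL d hd hfib (Finsupp.single s 1) (Finsupp.single x₀ 1))
              (Finsupp.single w 1)) :
    SL d hd hfib (Finsupp.single x₀ 1) (SL d hd hfib (Finsupp.single s 1) W) =
      SL d hd hfib (SL d hd hfib (Finsupp.single x₀ 1) (Finsupp.single s 1)) W
        + SL d hd hfib (Finsupp.single s 1) (SL d hd hfib (Finsupp.single x₀ 1) W)
        - SL d hd hfib (SL d hd hfib (Finsupp.single s 1) (Finsupp.single x₀ 1)) W := by
  have L : SL d hd hfib (Finsupp.single x₀ 1) (SL d hd hfib (Finsupp.single s 1) W) =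
      W.sum fun w c => c • SL d hd hfib (Finsupp.single x₀ 1)
        (SL d hd hfib (Finsupp.single s 1) (Finsupp.single w 1)) := by
    rw [SL_dec2 d hd hfib (Finsupp.single s 1) W, SL_right_map]
    exact Finsupp.sum_congr fun w _ => map_smul _ _ _
  have R1 : SL d hd hfib (SL d hd hfib (Finsupp.single x₀ 1) (Finsupp.single s 1)) W =
      W.sum fun w c => c • SL d hd hfib
        (SL d hd hfib (Finsupp.single x₀ 1) (Finsupp.single s 1)) (Finsupp.single w 1) :=
    SL_dec2 d hd hfib _ W
  have R2 : SL d hd hfib (Finsupp.single s 1) (SL d hd hfib (Finsupp.single x₀ 1) W) =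
      W.sum fun w c => c • SL d hd hfib (Finsupp.single s 1)
        (SL d hd hfib (Finsupp.single x₀ 1) (Finsupp.single w 1)) := by
    rw [SL_dec2 d hd hfib (Finsupp.single x₀ 1) W, SL_right_map]
    exact Finsupp.sum_congr fun w _ => map_smul _ _ _
  have R3 : SL d hd hfib (SL d hd hfib (Finsupp.single s 1) (Finsupp.single x₀ 1)) W =
      W.sum fun w c => c • SL d hd hfib
        (SL d hd hfib (Finsupp.single s 1) (Finsupp.single x₀ 1)) (Finsupp.single w 1) :=
    SL_dec2 d hd hfib _ W
  rw [L, R1, R2, R3, ← sum3_split]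
  exact Finsupp.sum_congr fun w hw => by rw [hpt w hw]

/-- extension of the rewriting rule over the left factor -/
lemma ExpL (u v : FreeMagma E) (W : AA)
    (hpt : ∀ w ∈ W.support,
      SL d hd hfib (Finsupp.single w 1) (Finsupp.single (u * v) 1) =
        SL d hd hfib (SL d hd hfib (Finsupp.single w 1) (Finsupp.single u 1))
            (Finsupp.single v 1)
          + SL d hd hfib (Finsupp.single u 1)
              (SL d hd hfib (Finsupp.single w 1) (Finsupp.single v 1))
          - SL d hd hfib (SL d hd hfib (Finsupp.single u 1) (Finsupp.single w 1))
              (Finsupp.single v 1)) :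
    SL d hd hfib W (Finsupp.single (u * v) 1) =
      SL d hd hfib (SL d hd hfib W (Finsupp.single u 1)) (Finsupp.single v 1)
        + SL d hd hfib (Finsupp.single u 1) (SL d hd hfib W (Finsupp.single v 1))
        - SL d hd hfib (SL d hd hfib (Finsupp.single u 1) W) (Finsupp.single v 1) := by
  have L : SL d hd hfib W (Finsupp.single (u * v) 1) =
      W.sum fun w c => c • SL d hd hfib (Finsupp.single w 1) (Finsupp.single (u * v) 1) :=
    SL_dec1 d hd hfib W _
  have R1 : SL d hd hfib (SL d hd hfib W (Finsupp.single u 1)) (Finsupp.single v 1) =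
      W.sum fun w c => c • SL d hd hfib
        (SL d hd hfib (Finsupp.single w 1) (Finsupp.single u 1)) (Finsupp.single v 1) := by
    rw [SL_dec1 d hd hfib W (Finsupp.single u 1), SL_left_sum]
    exact Finsupp.sum_congr fun w _ => LinearMap.map_smul₂ _ _ _ _
  have R2 : SL d hd hfib (Finsupp.single u 1) (SL d hd hfib W (Finsupp.single v 1)) =
      W.sum fun w c => c • SL d hd hfib (Finsupp.single u 1)
        (SL d hd hfib (Finsupp.single w 1) (Finsupp.single v 1)) := by
    rw [SL_dec1 d hd hfib W (Finsupp.single v 1), SL_right_map]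
    exact Finsupp.sum_congr fun w _ => map_smul _ _ _
  have R3 : SL d hd hfib (SL d hd hfib (Finsupp.single u 1) W) (Finsupp.single v 1) =
      W.sum fun w c => c • SL d hd hfib
        (SL d hd hfib (Finsupp.single u 1) (Finsupp.single w 1)) (Finsupp.single v 1) := by
    rw [SL_dec2 d hd hfib (Finsupp.single u 1) W, SL_left_sum]
    exact Finsupp.sum_congr fun w _ => LinearMap.map_smul₂ _ _ _ _
  rw [L, R1, R2, R3, ← sum3_split]
  exact Finsupp.sum_congr fun w hw => by rw [hpt w hw]

lemma rearrange {A B C D : AA} (h : A - B - C + D = 0) : A = B + C - D := by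
  apply sub_eq_zero.mp
  rw [show A - (B + C - D) = A - B - C + D from by abel]
  exact h

end PreLie
namespace PreLie
open FreeMagma

variable {E : Type*} [LinearOrder E]
set_option linter.unusedSectionVars false
set_option maxHeartbeats 4000000

local notation "AA" => ((FreeMagma E) →₀ ℚ)

variable (d : E → ℕ) (hd : ∀ a : E, 1 ≤ d a) (hfib : ∀ n : ℕ, {a : E | d a = n}.Finite)

/-- The pre-Lie identity for `SL` on nondecreasing monomials. -/
lemma PL_mono : ∀ (x y z : FreeMagma E), HasNondecreasingBranches d x →
    HasNondecreasingBranches d y → HasNondecreasingBranches d z →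
    SL d hd hfib (Finsupp.single x 1) (SL d hd hfib (Finsupp.single y 1) (Finsupp.single z 1))
      - SL d hd hfib (SL d hd hfib (Finsupp.single x 1) (Finsupp.single y 1))
          (Finsupp.single z 1)
      - SL d hd hfib (Finsupp.single y 1)
          (SL d hd hfib (Finsupp.single x 1) (Finsupp.single z 1))
      + SL d hd hfib (SL d hd hfib (Finsupp.single y 1) (Finsupp.single x 1))
          (Finsupp.single z 1) = 0 := by
  have main : ∀ p : FreeMagma E, ∀ x y z : FreeMagma E, HasNondecreasingBranches d x →
      HasNondecreasingBranches d y → HasNondecreasingBranches d z →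
      MagmaLt d y x → x * (y * z) = p →
      SL d hd hfib (Finsupp.single x 1)
          (SL d hd hfib (Finsupp.single y 1) (Finsupp.single z 1))
        - SL d hd hfib (SL d hd hfib (Finsupp.single x 1) (Finsupp.single y 1))
            (Finsupp.single z 1)
        - SL d hd hfib (Finsupp.single y 1)
            (SL d hd hfib (Finsupp.single x 1) (Finsupp.single z 1))
        + SL d hd hfib (SL d hd hfib (Finsupp.single y 1) (Finsupp.single x 1))
            (Finsupp.single z 1) = 0 := by
    intro p
    induction p using WellFounded.induction (magmaLt_wf hd hfib) with
    | _ p ih =>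
    intro x y z hx hy hz hyx heq
    subst heq
    -- wrapped induction hypothesis, valid for any triple both of whose associated
    -- monomials are smaller
    have IHD : ∀ x' y' z' : FreeMagma E, HasNondecreasingBranches d x' →
        HasNondecreasingBranches d y' → HasNondecreasingBranches d z' →
        MagmaLt d (x' * (y' * z')) (x * (y * z)) →
        MagmaLt d (y' * (x' * z')) (x * (y * z)) →
        SL d hd hfib (Finsupp.single x' 1)
            (SL d hd hfib (Finsupp.single y' 1) (Finsupp.single z' 1))
          - SL d hd hfib (SL d hd hfib (Finsupp.single x' 1) (Finsupp.single y' 1))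
              (Finsupp.single z' 1)
          - SL d hd hfib (Finsupp.single y' 1)
              (SL d hd hfib (Finsupp.single x' 1) (Finsupp.single z' 1))
          + SL d hd hfib (SL d hd hfib (Finsupp.single y' 1) (Finsupp.single x' 1))
              (Finsupp.single z' 1) = 0 := by
      intro x' y' z' hx' hy' hz' hμ hμ'
      rcases magmaLt_trichotomy (d := d) x' y' with h | rfl | h
      · have h0 := ih _ hμ' y' x' z' hy' hx' hz' h rfl
        have hneg : SL d hd hfib (Finsupp.single x' 1)
            (SL d hd hfib (Finsupp.single y' 1) (Finsupp.single z' 1))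
          - SL d hd hfib (SL d hd hfib (Finsupp.single x' 1) (Finsupp.single y' 1))
              (Finsupp.single z' 1)
          - SL d hd hfib (Finsupp.single y' 1)
              (SL d hd hfib (Finsupp.single x' 1) (Finsupp.single z' 1))
          + SL d hd hfib (SL d hd hfib (Finsupp.single y' 1) (Finsupp.single x' 1))
              (Finsupp.single z' 1)
          = -(SL d hd hfib (Finsupp.single y' 1)
            (SL d hd hfib (Finsupp.single x' 1) (Finsupp.single z' 1))
          - SL d hd hfib (SL d hd hfib (Finsupp.single y' 1) (Finsupp.single x' 1))
              (Finsupp.single z' 1)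
          - SL d hd hfib (Finsupp.single x' 1)
              (SL d hd hfib (Finsupp.single y' 1) (Finsupp.single z' 1))
          + SL d hd hfib (SL d hd hfib (Finsupp.single x' 1) (Finsupp.single y' 1))
              (Finsupp.single z' 1)) := by abel
        rw [hneg, h0, neg_zero]
      · abel
      · exact ih _ hμ x' y' z' hx' hy' hz' h rfl
    -- case analysis on z
    cases z with
    | of a =>
      rw [E1s d hd hfib hy a, E3s d hd hfib hx (hnb_mul_of hy a) hyx]
      abel
    | mul u v =>
      simp only [mul_def'] at hz ⊢
      rcases magmaLt_trichotomy (d := d) y u with hyu | rfl | huy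
      · rw [E2s d hd hfib hy hz (Or.inl hyu),
          E3s d hd hfib hx (hnb_mul_mul hy hz (Or.inl hyu)) hyx]
        abel
      · rw [E2s d hd hfib hy hz (Or.inr rfl),
          E3s d hd hfib hx (hnb_mul_mul hy hz (Or.inr rfl)) hyx]
        abel
      · -- the hard case: u ≺ y ≺ x
        obtain ⟨hu, hv, hcond⟩ := hnb_mul.mp hz
        have hux : MagmaLt d u x := magmaLt_trans huy hyx
        have hdx := mdeg_pos hd x
        have hdy := mdeg_pos hd y
        have hdu := mdeg_pos hd u
        have hdv := mdeg_pos hd v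
        have hdyx : mdeg d y ≤ mdeg d x := mdeg_le_of_lt hyx
        have hduy : mdeg d u ≤ mdeg d y := mdeg_le_of_lt huy
        -- μ helpers
        have muA : ∀ a w : FreeMagma E,
            mdeg d a + mdeg d w + mdeg d v = mdeg d x + mdeg d y + mdeg d u + mdeg d v →
            MagmaLt d (a * (w * v)) (x * (y * (u * v))) := by
          intro a w h
          exact .branches (by simp only [mdeg_mul]; omega) (by simp only [nbranch_mul]; omega)
        have muB : ∀ a b w : FreeMagma E,
            mdeg d a + mdeg d b + mdeg d w
              = mdeg d x + mdeg d y + mdeg d u + mdeg d v →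
            nbranch w ≤ nbranch v + 1 →
            (MagmaLt d a x ∨ (a = x ∧ MagmaLt d b y)) →
            MagmaLt d (a * (b * w)) (x * (y * (u * v))) := by
          intro a b w h hb hhead
          rcases lt_or_eq_of_le hb with hblt | hbeq
          · exact .branches (by simp only [mdeg_mul]; omega)
              (by simp only [nbranch_mul]; omega)
          · refine .lex (by simp only [mdeg_mul]; omega) (by simp only [nbranch_mul]; omega) ?_
            simp only [branchList_mul]
            rcases hhead with h1 | ⟨rfl, h2⟩
            · exact List.Lex.rel h1
            · exact List.Lex.cons (List.Lex.rel h2)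
        -- support facts
        have hsup : ∀ a b : FreeMagma E, ∀ w ∈ (SL d hd hfib (Finsupp.single a 1)
            (Finsupp.single b 1)).support, HasNondecreasingBranches d w ∧
            MagmaLe d w (a * b) ∧ mdeg d w = mdeg d a + mdeg d b := by
          intro a b w hw
          rw [SL_one_one] at hw
          have h := star_good d hd hfib (a * b) w hw
          simpa only [mdeg_mul] using h
        -- basic expansions
        have h1 := E3s d hd hfib hy hz huy
        have h2 := E3s d hd hfib hx hz hux
        -- T-expansions
        have T1a := IHE d hd hfib x v (SL d hd hfib (Finsupp.single y 1) (Finsupp.single u 1))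
          (by
            intro w hw
            obtain ⟨hwn, _, hwd⟩ := hsup y u w hw
            refine rearrange (IHD x w v hx hwn hv ?_ ?_)
            · exact muA x w (by omega)
            · exact muA w x (by omega))
        have T1c := IHE d hd hfib x v (SL d hd hfib (Finsupp.single u 1) (Finsupp.single y 1))
          (by
            intro w hw
            obtain ⟨hwn, _, hwd⟩ := hsup u y w hw
            refine rearrange (IHD x w v hx hwn hv ?_ ?_)
            · exact muA x w (by omega)
            · exact muA w x (by omega))
        have T3a := IHE d hd hfib y v (SL d hd hfib (Finsupp.single x 1) (Finsupp.single u 1))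
          (by
            intro w hw
            obtain ⟨hwn, _, hwd⟩ := hsup x u w hw
            refine rearrange (IHD y w v hy hwn hv ?_ ?_)
            · exact muA y w (by omega)
            · exact muA w y (by omega))
        have T3c := IHE d hd hfib y v (SL d hd hfib (Finsupp.single u 1) (Finsupp.single x 1))
          (by
            intro w hw
            obtain ⟨hwn, _, hwd⟩ := hsup u x w hw
            refine rearrange (IHD y w v hy hwn hv ?_ ?_)
            · exact muA y w (by omega)
            · exact muA w y (by omega))
        have T1b := IHE2 d hd hfib x u (SL d hd hfib (Finsupp.single y 1) (Finsupp.single v 1))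
          (by
            intro w hw
            obtain ⟨hwn, hwle, hwd⟩ := hsup y v w hw
            have hwb : nbranch w ≤ nbranch v + 1 := by
              have := nbranch_le_of_le hwle (by simp only [mdeg_mul]; omega)
              simpa only [nbranch_mul] using this
            refine rearrange (IHD x u w hx hu hwn ?_ ?_)
            · exact muB x u w (by omega) hwb (Or.inr ⟨rfl, huy⟩)
            · exact muB u x w (by omega) hwb (Or.inl hux))
        have T3b := IHE2 d hd hfib y u (SL d hd hfib (Finsupp.single x 1) (Finsupp.single v 1))
          (by
            intro w hw
            obtain ⟨hwn, hwle, hwd⟩ := hsup x v w hw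
            have hwb : nbranch w ≤ nbranch v + 1 := by
              have := nbranch_le_of_le hwle (by simp only [mdeg_mul]; omega)
              simpa only [nbranch_mul] using this
            refine rearrange (IHD y u w hy hu hwn ?_ ?_)
            · exact muB y u w (by omega) hwb (Or.inl hyx)
            · exact muB u y w (by omega) hwb (Or.inl hux))
        have T2 := ExpL d hd hfib u v (SL d hd hfib (Finsupp.single x 1) (Finsupp.single y 1))
          (by
            intro w hw
            obtain ⟨hwn, _, hwd⟩ := hsup x y w hw
            exact E3s d hd hfib hwn hz (.deg (by omega)))
        have T4 := ExpL d hd hfib u v (SL d hd hfib (Finsupp.single y 1) (Finsupp.single x 1))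
          (by
            intro w hw
            obtain ⟨hwn, _, hwd⟩ := hsup y x w hw
            exact E3s d hd hfib hwn hz (.deg (by omega)))
        -- degree-smaller monomial instances
        have e1 := rearrange (IHD x y v hx hy hv
          (.deg (by simp only [mul_def', mdeg_mul]; omega)) (.deg (by simp only [mul_def', mdeg_mul]; omega)))
        have e2 := rearrange (IHD x y u hx hy hu
          (.deg (by simp only [mul_def', mdeg_mul]; omega)) (.deg (by simp only [mul_def', mdeg_mul]; omega)))
        have e3 := rearrange (IHD u x y hu hx hy
          (.deg (by simp only [mul_def', mdeg_mul]; omega)) (.deg (by simp only [mul_def', mdeg_mul]; omega)))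
        have e4 := rearrange (IHD u y x hu hy hx
          (.deg (by simp only [mul_def', mdeg_mul]; omega)) (.deg (by simp only [mul_def', mdeg_mul]; omega)))
        -- assemble
        rw [h1, h2]
        simp only [map_add, map_sub, LinearMap.add_apply, LinearMap.sub_apply]
        rw [T1a, T1b, T1c, T3a, T3b, T3c, T2, T4]
        rw [e1, e2, e3, e4]
        simp only [map_add, map_sub, LinearMap.add_apply, LinearMap.sub_apply]
        abel
  intro x y z hx hy hz
  rcases magmaLt_trichotomy (d := d) x y with h | rfl | h
  · have h0 := main _ y x z hy hx hz h rfl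
    have hneg : SL d hd hfib (Finsupp.single x 1)
        (SL d hd hfib (Finsupp.single y 1) (Finsupp.single z 1))
      - SL d hd hfib (SL d hd hfib (Finsupp.single x 1) (Finsupp.single y 1))
          (Finsupp.single z 1)
      - SL d hd hfib (Finsupp.single y 1)
          (SL d hd hfib (Finsupp.single x 1) (Finsupp.single z 1))
      + SL d hd hfib (SL d hd hfib (Finsupp.single y 1) (Finsupp.single x 1))
          (Finsupp.single z 1)
      = -(SL d hd hfib (Finsupp.single y 1)
        (SL d hd hfib (Finsupp.single x 1) (Finsupp.single z 1))
      - SL d hd hfib (SL d hd hfib (Finsupp.single y 1) (Finsupp.single x 1))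
          (Finsupp.single z 1)
      - SL d hd hfib (Finsupp.single x 1)
          (SL d hd hfib (Finsupp.single y 1) (Finsupp.single z 1))
      + SL d hd hfib (SL d hd hfib (Finsupp.single x 1) (Finsupp.single y 1))
          (Finsupp.single z 1)) := by abel
    rw [hneg, h0, neg_zero]
  · abel
  · exact main _ x y z hx hy hz h rfl

end PreLie
namespace PreLie
open FreeMagma

variable {E : Type*} [LinearOrder E]
set_option linter.unusedSectionVars false
set_option maxHeartbeats 1600000

local notation "AA" => ((FreeMagma E) →₀ ℚ)

variable (d : E → ℕ) (hd : ∀ a : E, 1 ≤ d a) (hfib : ∀ n : ℕ, {a : E | d a = n}.Finite)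

/-- the pre-Lie associator defect -/
noncomputable def DD (f g h : AA) : AA :=
  SL d hd hfib f (SL d hd hfib g h) - SL d hd hfib (SL d hd hfib f g) h
    - SL d hd hfib g (SL d hd hfib f h) + SL d hd hfib (SL d hd hfib g f) h

lemma sum4_split (W : AA) (A B C D₄ : FreeMagma E → AA) :
    (W.sum fun w c => c • (A w - B w - C w + D₄ w)) =
      (W.sum fun w c => c • A w) - (W.sum fun w c => c • B w)
        - (W.sum fun w c => c • C w) + (W.sum fun w c => c • D₄ w) := by
  classical
  rw [Finsupp.sum, Finsupp.sum, Finsupp.sum, Finsupp.sum, Finsupp.sum,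
    ← Finset.sum_sub_distrib, ← Finset.sum_sub_distrib, ← Finset.sum_add_distrib]
  apply Finset.sum_congr rfl
  intro w _
  rw [smul_add, smul_sub, smul_sub]

lemma DD_dec3 (f g h : AA) :
    DD d hd hfib f g h = h.sum fun w c => c • DD d hd hfib f g (Finsupp.single w 1) := by
  unfold DD
  have c1 : SL d hd hfib f (SL d hd hfib g h) =
      h.sum fun w c => c • SL d hd hfib f (SL d hd hfib g (Finsupp.single w 1)) := by
    rw [SL_dec2 d hd hfib g h, SL_right_map]
    exact Finsupp.sum_congr fun w _ => map_smul _ _ _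
  have c2 : SL d hd hfib (SL d hd hfib f g) h =
      h.sum fun w c => c • SL d hd hfib (SL d hd hfib f g) (Finsupp.single w 1) :=
    SL_dec2 d hd hfib _ h
  have c3 : SL d hd hfib g (SL d hd hfib f h) =
      h.sum fun w c => c • SL d hd hfib g (SL d hd hfib f (Finsupp.single w 1)) := by
    rw [SL_dec2 d hd hfib f h, SL_right_map]
    exact Finsupp.sum_congr fun w _ => map_smul _ _ _
  have c4 : SL d hd hfib (SL d hd hfib g f) h =
      h.sum fun w c => c • SL d hd hfib (SL d hd hfib g f) (Finsupp.single w 1) :=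
    SL_dec2 d hd hfib _ h
  rw [c1, c2, c3, c4, ← sum4_split]

lemma DD_dec2 (f g : AA) (w : FreeMagma E) :
    DD d hd hfib f g (Finsupp.single w 1) =
      g.sum fun t c => c • DD d hd hfib f (Finsupp.single t 1) (Finsupp.single w 1) := by
  unfold DD
  have c1 : SL d hd hfib f (SL d hd hfib g (Finsupp.single w 1)) =
      g.sum fun t c => c • SL d hd hfib f
        (SL d hd hfib (Finsupp.single t 1) (Finsupp.single w 1)) := by
    rw [SL_dec1 d hd hfib g (Finsupp.single w 1), SL_right_map]
    exact Finsupp.sum_congr fun t _ => map_smul _ _ _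
  have c2 : SL d hd hfib (SL d hd hfib f g) (Finsupp.single w 1) =
      g.sum fun t c => c • SL d hd hfib (SL d hd hfib f (Finsupp.single t 1))
        (Finsupp.single w 1) := by
    rw [SL_dec2 d hd hfib f g, SL_left_sum]
    exact Finsupp.sum_congr fun t _ => LinearMap.map_smul₂ _ _ _ _
  have c3 : SL d hd hfib g (SL d hd hfib f (Finsupp.single w 1)) =
      g.sum fun t c => c • SL d hd hfib (Finsupp.single t 1)
        (SL d hd hfib f (Finsupp.single w 1)) :=
    SL_dec1 d hd hfib g _
  have c4 : SL d hd hfib (SL d hd hfib g f) (Finsupp.single w 1) =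
      g.sum fun t c => c • SL d hd hfib (SL d hd hfib (Finsupp.single t 1) f)
        (Finsupp.single w 1) := by
    rw [SL_dec1 d hd hfib g f, SL_left_sum]
    exact Finsupp.sum_congr fun t _ => LinearMap.map_smul₂ _ _ _ _
  rw [c1, c2, c3, c4, ← sum4_split]

lemma DD_dec1 (f : AA) (t w : FreeMagma E) :
    DD d hd hfib f (Finsupp.single t 1) (Finsupp.single w 1) =
      f.sum fun s c => c • DD d hd hfib (Finsupp.single s 1) (Finsupp.single t 1)
        (Finsupp.single w 1) := by
  unfold DD
  have c1 : SL d hd hfib f (SL d hd hfib (Finsupp.single t 1) (Finsupp.single w 1)) =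
      f.sum fun s c => c • SL d hd hfib (Finsupp.single s 1)
        (SL d hd hfib (Finsupp.single t 1) (Finsupp.single w 1)) :=
    SL_dec1 d hd hfib f _
  have c2 : SL d hd hfib (SL d hd hfib f (Finsupp.single t 1)) (Finsupp.single w 1) =
      f.sum fun s c => c • SL d hd hfib
        (SL d hd hfib (Finsupp.single s 1) (Finsupp.single t 1)) (Finsupp.single w 1) := by
    rw [SL_dec1 d hd hfib f (Finsupp.single t 1), SL_left_sum]
    exact Finsupp.sum_congr fun s _ => LinearMap.map_smul₂ _ _ _ _
  have c3 : SL d hd hfib (Finsupp.single t 1) (SL d hd hfib f (Finsupp.single w 1)) =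
      f.sum fun s c => c • SL d hd hfib (Finsupp.single t 1)
        (SL d hd hfib (Finsupp.single s 1) (Finsupp.single w 1)) := by
    rw [SL_dec1 d hd hfib f (Finsupp.single w 1), SL_right_map]
    exact Finsupp.sum_congr fun s _ => map_smul _ _ _
  have c4 : SL d hd hfib (SL d hd hfib (Finsupp.single t 1) f) (Finsupp.single w 1) =
      f.sum fun s c => c • SL d hd hfib
        (SL d hd hfib (Finsupp.single t 1) (Finsupp.single s 1)) (Finsupp.single w 1) := by
    rw [SL_dec2 d hd hfib (Finsupp.single t 1) f, SL_left_sum]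
    exact Finsupp.sum_congr fun s _ => LinearMap.map_smul₂ _ _ _ _
  rw [c1, c2, c3, c4, ← sum4_split]

lemma PL_ext (f g h : AA) (hf : ∀ ρ ∈ f.support, HasNondecreasingBranches d ρ)
    (hg : ∀ ρ ∈ g.support, HasNondecreasingBranches d ρ)
    (hh : ∀ ρ ∈ h.support, HasNondecreasingBranches d ρ) :
    DD d hd hfib f g h = 0 := by
  rw [DD_dec3]
  rw [Finsupp.sum]
  apply Finset.sum_eq_zero
  intro w hw
  rw [DD_dec2, Finsupp.sum]
  rw [show (∑ t ∈ g.support, g t • DD d hd hfib f (Finsupp.single t 1) (Finsupp.single w 1))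
      = 0 from ?_, smul_zero]
  apply Finset.sum_eq_zero
  intro t ht
  rw [DD_dec1, Finsupp.sum]
  rw [show (∑ s ∈ f.support, f s • DD d hd hfib (Finsupp.single s 1) (Finsupp.single t 1)
      (Finsupp.single w 1)) = 0 from ?_, smul_zero]
  apply Finset.sum_eq_zero
  intro s hs
  have := PL_mono d hd hfib s t w (hf s hs) (hg t ht) (hh w hw)
  rw [show DD d hd hfib (Finsupp.single s 1) (Finsupp.single t 1) (Finsupp.single w 1) = 0
    from this, smul_zero]

/-- `phi` kills the ideal. -/
lemma phi_ideal_zero : ∀ f ∈ twoSidedIdealGen (preLieAssocSet E), phi d hd hfib f.coeff = 0 := by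
  classical
  set K : Submodule ℚ (FreeNonUnitalNonAssocAlgebra ℚ E) :=
    { carrier := {f | phi d hd hfib f.coeff = 0}
      add_mem' := by
        intro a b ha hb
        simp only [Set.mem_setOf_eq] at *
        rw [MonoidAlgebra.coeff_add, map_add, ha, hb, add_zero]
      zero_mem' := by simp only [Set.mem_setOf_eq, MonoidAlgebra.coeff_zero, map_zero]
      smul_mem' := by
        intro c f hf
        simp only [Set.mem_setOf_eq] at *
        rw [MonoidAlgebra.coeff_smul, map_smul, hf, smul_zero] } with hK
  intro f hf
  have h1 : f ∈ K := by
    refine mem_twoSidedIdealGen.mp hf K ?_ ?_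
    · intro a x hx
      have hx' : phi d hd hfib x.coeff = 0 := hx
      constructor
      · show phi d hd hfib (a * x).coeff = 0
        rw [phi_mul, hx', map_zero]
      · show phi d hd hfib (x * a).coeff = 0
        rw [phi_mul, hx', map_zero, LinearMap.zero_apply]
    · rintro w ⟨x, y, z, rfl⟩
      show phi d hd hfib (MonoidAlgebra.coeff _) = 0
      simp only [MonoidAlgebra.coeff_add, MonoidAlgebra.coeff_sub, map_add, map_sub, phi_mul]
      have := PL_ext d hd hfib (phi d hd hfib x.coeff) (phi d hd hfib y.coeff) (phi d hd hfib z.coeff)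
        (phi_good d hd hfib x.coeff) (phi_good d hd hfib y.coeff) (phi_good d hd hfib z.coeff)
      unfold DD at this
      exact this
  exact h1

end PreLie
/-- `O(J)`, the complement of the set of maximal terms of elements of the ideal `J`
generated by the pre-Lie associators, is exactly the set of monomials with
nondecreasing branches. -/
theorem outTermSet_preLie_ideal_eq_nondecreasing (E : Type*) [LinearOrder E]
    (hwo : WellFoundedLT E) (d : E → ℕ) (hd : ∀ a : E, 1 ≤ d a)
    (hfib : ∀ n : ℕ, {a : E | d a = n}.Finite)
    (href : ∀ a b : E, d a < d b → a < b) :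
    (maxTermSetWrt d (twoSidedIdealGen (preLieAssocSet E)))ᶜ =
      {σ : FreeMagma E | HasNondecreasingBranches d σ} := by
  ext σ
  simp only [Set.mem_compl_iff, Set.mem_setOf_eq]
  constructor
  · intro hσ
    by_contra hnd
    exact hσ (PreLie.mem_maxTermSet_of_not_nondecr hnd)
  · intro hnd hmem
    obtain ⟨f, hfJ, hmax⟩ := hmem
    have h0 : PreLie.phi d hd hfib f.coeff = 0 := PreLie.phi_ideal_zero d hd hfib f hfJ
    have h1 := PreLie.phi_apply_maxterm d hd hfib hmax hnd
    rw [h0] at h1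
    have h2 : f.coeff σ ≠ 0 := Finsupp.mem_support_iff.mp hmax.1
    exact h2 (by rw [← h1]; rfl)
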